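/- Let R be a commutative ring, f : R → R' a surjective ring homomorphism, and M' a pseudo-absorbing primary multiplication R'-module. Then M' is a pseudo-absorbing primary multiplication R-module (via restriction of scalars along f). -/
import Mathlib


/-- A proper ideal `I` is 2-absorbing primary if `a*b*c ∈ I` implies
`a*b ∈ I` or `a*c ∈ √I` or `b*c ∈ √I`. -/
def IsTwoAbsPrimary {R : Type*} [CommRing R] (I : Ideal R) : Prop :=
  I ≠ ⊤ ∧ ∀ a b c : R, a * b * c ∈ I → a * b ∈ I ∨ a * c ∈ I.radical ∨ b * c ∈ I.radical

/-- A proper submodule `N` of `M` is pseudo-absorbing primary if `(N :_R M)`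
is a 2-absorbing primary ideal of `R`. -/
def IsPseudoAbsPrimary {R M : Type*} [CommRing R] [AddCommGroup M] [Module R M]
    (N : Submodule R M) : Prop :=
  N ≠ ⊤ ∧ IsTwoAbsPrimary (N.colon ⊤)

/-- `M` is a pseudo-absorbing primary multiplication module if every
pseudo-absorbing primary submodule `N` satisfies `N = I • M` for some ideal `I`. -/
def IsPAPMultiplication (R M : Type*) [CommRing R] [AddCommGroup M] [Module R M] : Prop :=
  ∀ N : Submodule R M, IsPseudoAbsPrimary N → ∃ I : Ideal R, N = I • (⊤ : Submodule R M)

theorem stmt_18 {R R' M' : Type*} [CommRing R] [CommRing R']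
    [AddCommGroup M'] [Module R' M'] (f : R →+* R') (hf : Function.Surjective f)
    (hM : IsPAPMultiplication R' M') :
    letI : Module R M' := Module.compHom M' f
    IsPAPMultiplication R M' := by
  intro N hN
  -- transfer N to an R'-submodule
  letI : Module R M' := Module.compHom M' f
  have hsmul : ∀ (r : R) (m : M'), r • m = f r • m := fun r m => rfl
  set N' : Submodule R' M' :=
    { carrier := N
      add_mem' := fun h1 h2 => N.add_mem h1 h2
      zero_mem' := N.zero_mem
      smul_mem' := by
        intro r' m hm
        obtain ⟨r, rfl⟩ := hf r'
        exact N.smul_mem r hm } with hN'def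
  have hmem : ∀ m : M', m ∈ N' ↔ m ∈ N := fun m => Iff.rfl
  -- colon relation
  have hcolon : N.colon ⊤ = (N'.colon ⊤).comap f := by
    ext r
    simp only [Submodule.mem_colon, Ideal.mem_comap]
    constructor
    · intro h m _
      exact h m trivial
    · intro h m _
      exact h m trivial
  have hN'pap : IsPseudoAbsPrimary N' := by
    obtain ⟨hNne, hI⟩ := hN
    constructor
    · intro h
      apply hNne
      ext m
      simp only [Submodule.mem_top, iff_true]
      have : m ∈ N' := h ▸ trivial
      exact this
    · rw [hcolon] at hI
      obtain ⟨hIne, hItwo⟩ := hI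
      constructor
      · intro h
        exact hIne (by rw [h, Ideal.comap_top])
      · intro a' b' c' habc
        obtain ⟨a, rfl⟩ := hf a'
        obtain ⟨b, rfl⟩ := hf b'
        obtain ⟨c, rfl⟩ := hf c'
        have : a * b * c ∈ ((N'.colon ⊤).comap f) := by
          simp only [Ideal.mem_comap, map_mul]
          exact habc
        rcases hItwo a b c this with h | h | h
        · left; simpa using h
        · right; left
          rw [← Ideal.comap_radical] at h
          simpa using h
        · right; right
          rw [← Ideal.comap_radical] at h
          simpa using h
  obtain ⟨I', hI'⟩ := hM N' hN'pap
  refine ⟨I'.comap f, le_antisymm ?_ ?_⟩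
  · intro m hm
    have hm' : m ∈ I' • (⊤ : Submodule R' M') := hI' ▸ hm
    refine Submodule.smul_induction_on hm' ?_ ?_
    · intro r' hr' m _
      obtain ⟨r, rfl⟩ := hf r'
      have : r • m ∈ (I'.comap f) • (⊤ : Submodule R M') :=
        Submodule.smul_mem_smul hr' trivial
      exact this
    · intro x y hx hy
      exact Submodule.add_mem _ hx hy
  · rw [Submodule.smul_le]
    intro r hr m _
    have : f r • m ∈ I' • (⊤ : Submodule R' M') :=
      Submodule.smul_mem_smul hr trivial
    have h2 : f r • m ∈ N' := hI'.symm ▸ this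
    exact h2
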